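/- (Non-pathwise additive dual representation for robust single stopping) Let ρ satisfy (C1)-(C4), let Y*_t = sup over stopping times τ ∈ {t,...,T} of ρ_t(H_τ) be the upper Snell envelope of an adapted reward process H, and let M* be the ρ-martingale of the ρ-Doob decomposition Y*_t = Y*_0 + M*_t − A*_t (so that M*_{t+1} − M*_t = Y*_{t+1} − ρ_t(Y*_{t+1})). Then for each t ∈ {0,...,T}: Y*_t = inf over ρ-martingales M with M_0 = 0 of ρ_t(max_{t ≤ j ≤ T}(H_j + M_T − M_j)), and the infimum is attained at M*: Y*_t = ρ_t(max_{t ≤ j ≤ T}(H_j + M*_T − M*_j)). -/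

import Mathlib

open MeasureTheory

/-- Non-pathwise additive dual representation for robust single stopping:
for a DMU `ρ` satisfying (C1)–(C4), the upper Snell envelope `Y*` (given by
the Bellman recursion) satisfies, for each `t ≤ T`,
`Y*_t ≤ ρ_t (max_{t ≤ j ≤ T} (H_j + M_T - M_j))` for every `ρ`-martingale `M`
with `M_0 = 0`, and the infimum is attained at the `ρ`-Doob martingale `M*`:
`Y*_t = ρ_t (max_{t ≤ j ≤ T} (H_j + M*_T - M*_j))`. -/
theorem dmu_additive_dual_representation
    {Ω : Type*} {m : MeasurableSpace Ω}
    (F : MeasureTheory.Filtration ℕ m) (T : ℕ)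
    (ρ : ℕ → (Ω → ℝ) → (Ω → ℝ))
    (hmeas : ∀ s (X : Ω → ℝ), Measurable[F s] (ρ s X))
    (hmono : ∀ s, s ≤ T → ∀ (X Y : Ω → ℝ), X ≤ Y → ρ s X ≤ ρ s Y)
    (hreg : ∀ s, s ≤ T → ∀ (X : Ω → ℝ) (A : Set Ω), MeasurableSet[F s] A →
      ρ s (A.indicator X) = A.indicator (ρ s X))
    (hrec : ∀ s, s < T → ∀ (X : Ω → ℝ), ρ s (ρ (s + 1) X) = ρ s X)
    (hcti : ∀ s, s ≤ T → ∀ (X Y : Ω → ℝ), Measurable[F s] Y →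
      ρ s (X + Y) = ρ s X + Y)
    (H : ℕ → Ω → ℝ) (hHadapted : ∀ s, Measurable[F s] (H s))
    (Ystar : ℕ → Ω → ℝ)
    (hYT : Ystar T = H T)
    (hBell : ∀ r, r < T → ∀ ω,
      Ystar r ω = max (H r ω) (ρ r (Ystar (r + 1)) ω))
    (Mstar : ℕ → Ω → ℝ)
    (hM0 : Mstar 0 = 0)
    (hMinc : ∀ r, r < T → ∀ ω,
      Mstar (r + 1) ω - Mstar r ω = Ystar (r + 1) ω - ρ r (Ystar (r + 1)) ω)
    (t : ℕ) (ht : t ≤ T) :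
    (∀ M : ℕ → Ω → ℝ, (∀ s, Measurable[F s] (M s)) →
        (∀ s, s < T → M s = ρ s (M (s + 1))) → M 0 = 0 →
        ∀ ω, Ystar t ω ≤
          ρ t (fun ω' => (Finset.Icc t T).sup' (Finset.nonempty_Icc.mpr ht)
            (fun j => H j ω' + M T ω' - M j ω')) ω) ∧
    (∀ ω, Ystar t ω =
      ρ t (fun ω' => (Finset.Icc t T).sup' (Finset.nonempty_Icc.mpr ht)
        (fun j => H j ω' + Mstar T ω' - Mstar j ω')) ω) := by
  -- ρ kills zero
  have hzero : ∀ s, s ≤ T → ρ s (0 : Ω → ℝ) = 0 := by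
    intro s hs
    have h := hreg s hs 0 ∅ (@MeasurableSet.empty Ω (F s))
    simp at h; exact h
  -- ρ is the identity on F s–measurable functions
  have hid : ∀ s, s ≤ T → ∀ X : Ω → ℝ, Measurable[F s] X → ρ s X = X := by
    intro s hs X hX
    have h := hcti s hs 0 X hX
    simpa [hzero s hs] using h
  -- Ystar is adapted
  have hYadapted : ∀ s, s ≤ T → Measurable[F s] (Ystar s) := by
    intro s hs
    rcases eq_or_lt_of_le hs with h | h
    · rw [h, hYT]; exact hHadapted T
    · have hfun : Ystar s = fun ω => max (H s ω) (ρ s (Ystar (s + 1)) ω) :=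
        funext (hBell s h)
      rw [hfun]
      exact (hHadapted s).max (hmeas s _)
  -- transport for ρ-martingales : ρ t (M T) = M t
  have htransport : ∀ (M : ℕ → Ω → ℝ), (∀ s, s ≤ T → Measurable[F s] (M s)) →
      (∀ s, s < T → M s = ρ s (M (s + 1))) →
      ∀ k t', t' + k = T → ρ t' (M T) = M t' := by
    intro M hMad hMmart k
    induction k with
    | zero =>
      intro t' h
      have ht' : t' = T := by omega
      subst ht'
      exact hid t' le_rfl (M t') (hMad t' le_rfl)
    | succ k ihk =>
      intro t' h
      have hlt : t' < T := by omega
      have h1 : ρ (t' + 1) (M T) = M (t' + 1) := ihk (t' + 1) (by omega)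
      calc ρ t' (M T) = ρ t' (ρ (t' + 1) (M T)) := (hrec t' hlt (M T)).symm
        _ = ρ t' (M (t' + 1)) := by rw [h1]
        _ = M t' := (hMmart t' hlt).symm
  -- Part 1 : the inequality for any ρ-martingale
  have part1 : ∀ (M : ℕ → Ω → ℝ), (∀ s, s ≤ T → Measurable[F s] (M s)) →
      (∀ s, s < T → M s = ρ s (M (s + 1))) →
      ∀ k t' (hk : t' + k = T), ∀ ω, Ystar t' ω ≤
        ρ t' (fun ω' => (Finset.Icc t' T).sup'
          (Finset.nonempty_Icc.mpr (by omega : t' ≤ T))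
          (fun j => H j ω' + M T ω' - M j ω')) ω := by
    intro M hMad hMmart k
    induction k with
    | zero =>
      intro t' h ω
      have ht' : t' = T := by omega
      subst ht'
      have hfun : (fun ω' => (Finset.Icc t' t').sup'
          (Finset.nonempty_Icc.mpr (le_refl t'))
          (fun j => H j ω' + M t' ω' - M j ω')) = H t' := by
        funext ω'
        simp [Finset.Icc_self]
      have hρ : ρ t' (fun ω' => (Finset.Icc t' t').sup'
          (Finset.nonempty_Icc.mpr (le_refl t'))
          (fun j => H j ω' + M t' ω' - M j ω')) = H t' := by
        rw [hfun]; exact hid t' le_rfl (H t') (hHadapted t')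
      rw [hYT]
      exact le_of_eq (congrFun hρ.symm ω)
    | succ k ihk =>
      intro t' h ω
      have hlt : t' < T := by omega
      have hle : t' ≤ T := hlt.le
      rw [hBell t' hlt ω]
      apply max_le
      · -- H t' ω ≤ ρ t' (sup)
        have e1 : ρ t' (M T + (H t' - M t')) = M t' + (H t' - M t') := by
          rw [hcti t' hle (M T) (H t' - M t') ((hHadapted t').sub (hMad t' hle)),
            htransport M hMad hMmart (k + 1) t' h]
        have e2 : H t' ω = ρ t' (M T + (H t' - M t')) ω := by
          rw [e1]; simp only [Pi.add_apply, Pi.sub_apply]; ring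
        rw [e2]
        refine hmono t' hle _ _ (fun ω' => ?_) ω
        have hmem : t' ∈ Finset.Icc t' T := Finset.mem_Icc.mpr ⟨le_rfl, hle⟩
        refine le_trans (le_of_eq ?_)
          (Finset.le_sup' (fun j => H j ω' + M T ω' - M j ω') hmem)
        simp only [Pi.add_apply, Pi.sub_apply]; ring
      · -- ρ t' (Ystar (t'+1)) ω ≤ ρ t' (sup)
        have ih' := ihk (t' + 1) (by omega)
        have s1 : ρ t' (Ystar (t' + 1)) ω ≤
            ρ t' (ρ (t' + 1) (fun ω' => (Finset.Icc (t' + 1) T).sup'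
              (Finset.nonempty_Icc.mpr (by omega : t' + 1 ≤ T))
              (fun j => H j ω' + M T ω' - M j ω'))) ω :=
          hmono t' hle _ _ (fun ω'' => ih' ω'') ω
        have s2 : ρ t' (ρ (t' + 1) (fun ω' => (Finset.Icc (t' + 1) T).sup'
              (Finset.nonempty_Icc.mpr (by omega : t' + 1 ≤ T))
              (fun j => H j ω' + M T ω' - M j ω'))) ω =
            ρ t' (fun ω' => (Finset.Icc (t' + 1) T).sup'
              (Finset.nonempty_Icc.mpr (by omega : t' + 1 ≤ T))
              (fun j => H j ω' + M T ω' - M j ω')) ω := by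
          rw [hrec t' hlt]
        have s3 : ρ t' (fun ω' => (Finset.Icc (t' + 1) T).sup'
              (Finset.nonempty_Icc.mpr (by omega : t' + 1 ≤ T))
              (fun j => H j ω' + M T ω' - M j ω')) ω ≤
            ρ t' (fun ω' => (Finset.Icc t' T).sup'
              (Finset.nonempty_Icc.mpr (by omega : t' ≤ T))
              (fun j => H j ω' + M T ω' - M j ω')) ω := by
          refine hmono t' hle _ _ (fun ω' => ?_) ω
          exact Finset.sup'_mono _ (Finset.Icc_subset_Icc (Nat.le_succ t') le_rfl) _
        exact le_trans (s1.trans (le_of_eq s2)) s3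
  -- Mstar is adapted
  have hMsad : ∀ s, s ≤ T → Measurable[F s] (Mstar s) := by
    intro s
    induction s with
    | zero => intro _; rw [hM0]; exact measurable_const
    | succ s ihs =>
      intro hs1
      have hs : s < T := hs1
      have heq : Mstar (s + 1) =
          fun ω => Mstar s ω + (Ystar (s + 1) ω - ρ s (Ystar (s + 1)) ω) := by
        funext ω
        have := hMinc s hs ω
        linarith
      rw [heq]
      exact ((ihs hs.le).mono (F.mono (Nat.le_succ s)) le_rfl).add
        ((hYadapted (s + 1) hs1).sub ((hmeas s _).mono (F.mono (Nat.le_succ s)) le_rfl))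
  -- Mstar is a ρ-martingale
  have hMsmart : ∀ s, s < T → Mstar s = ρ s (Mstar (s + 1)) := by
    intro s hs
    have heq : Mstar (s + 1) = Ystar (s + 1) + (Mstar s - ρ s (Ystar (s + 1))) := by
      funext ω
      have := hMinc s hs ω
      simp only [Pi.add_apply, Pi.sub_apply]
      linarith
    rw [heq, hcti s hs.le (Ystar (s + 1)) (Mstar s - ρ s (Ystar (s + 1)))
      ((hMsad s hs.le).sub (hmeas s (Ystar (s + 1))))]
    funext ω
    simp only [Pi.add_apply, Pi.sub_apply]
    ring
  -- H ≤ Ystar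
  have hHY : ∀ j, j ≤ T → ∀ ω, H j ω ≤ Ystar j ω := by
    intro j hj ω
    rcases eq_or_lt_of_le hj with h | h
    · rw [h, hYT]
    · rw [hBell j h ω]; exact le_max_left _ _
  -- Ystar - Mstar is non-increasing
  have hdec : ∀ j, t ≤ j → j ≤ T → ∀ ω,
      Ystar j ω - Mstar j ω ≤ Ystar t ω - Mstar t ω := by
    intro j hj
    induction j, hj using Nat.le_induction with
    | base => intro _ ω; exact le_refl _
    | succ j hj ihj =>
      intro hj1 ω
      have hjT : j < T := hj1
      have h1 := hMinc j hjT ω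
      have h2 : ρ j (Ystar (j + 1)) ω ≤ Ystar j ω := by
        rw [hBell j hjT ω]; exact le_max_right _ _
      have h3 := ihj (by omega) ω
      linarith
  constructor
  · intro M hMad hMmart _ ω
    exact part1 M (fun s _ => hMad s) hMmart (T - t) t (by omega) ω
  · intro ω
    apply le_antisymm
    · exact part1 Mstar hMsad hMsmart (T - t) t (by omega) ω
    · have hbound : (fun ω' => (Finset.Icc t T).sup' (Finset.nonempty_Icc.mpr ht)
          (fun j => H j ω' + Mstar T ω' - Mstar j ω')) ≤
          Mstar T + (Ystar t - Mstar t) := by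
        intro ω'
        apply Finset.sup'_le
        intro j hj
        rw [Finset.mem_Icc] at hj
        have h1 := hHY j hj.2 ω'
        have h2 := hdec j hj.1 hj.2 ω'
        simp only [Pi.add_apply, Pi.sub_apply]
        linarith
      refine le_trans (hmono t ht _ _ hbound ω) (le_of_eq ?_)
      rw [hcti t ht (Mstar T) (Ystar t - Mstar t) ((hYadapted t ht).sub (hMsad t ht)),
        htransport Mstar hMsad hMsmart (T - t) t (by omega)]
      simp only [Pi.add_apply, Pi.sub_apply]
      ring
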